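/- arXiv:2405.18333 — 3 statements merged into one kernel-verified Lean document; each statement's English description precedes it below -/
import Mathlib

section
/- Let B ∈ ℝ^{[3,n]} and A ∈ ℝ^{n×n} be generalized row strictly diagonally dominant with all positive diagonal entries, and let q ∈ ℝ^n \ ℝ^n_+. If x ∈ ℝ^n solves the quadratic complementarity problem (x ≥ 0, Bx² + Ax + q ≥ 0, xᵀ(Bx² + Ax + q) = 0) and ‖x‖_∞ = x_k for some index k, then q_k < 0 and (Bx² + Ax)_k + q_k = 0. -/
/-- sum of absolute values of negative off-diagonal entries in row `i` of a
third order tensor. -/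
noncomputable def rMinus3 {n : ℕ} (B : Fin n → Fin n → Fin n → ℝ) (i : Fin n) : ℝ :=
  ∑ j, ∑ l, if (j, l) ≠ (i, i) ∧ B i j l < 0 then |B i j l| else 0

/-- sum of absolute values of negative off-diagonal entries in row `i` of a matrix. -/
noncomputable def rMinus2 {n : ℕ} (A : Fin n → Fin n → ℝ) (i : Fin n) : ℝ :=
  ∑ j, if j ≠ i ∧ A i j < 0 then |A i j| else 0

lemma sum_bound3 {n : ℕ} (B : Fin n → Fin n → Fin n → ℝ) (x : Fin n → ℝ) (k : Fin n)
    (hx0 : ∀ i, 0 ≤ x i) (hk : ∀ i, x i ≤ x k) :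
    (B k k k - rMinus3 B k) * (x k * x k) ≤ ∑ j, ∑ l, B k j l * x j * x l := by
  have key : (∑ j, ∑ l, (if (j, l) = (k, k) then B k k k * (x k * x k)
      else if B k j l < 0 then -|B k j l| * (x k * x k) else 0))
      ≤ ∑ j, ∑ l, B k j l * x j * x l := by
    refine Finset.sum_le_sum fun j _ => Finset.sum_le_sum fun l _ => ?_
    by_cases hjl : (j, l) = (k, k)
    · obtain ⟨hj, hl⟩ : j = k ∧ l = k := Prod.mk.injEq .. ▸ hjl
      subst hj; subst hl; simp [mul_assoc]
    · simp only [hjl, if_false]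
      by_cases hB : B k j l < 0
      · simp only [hB, if_true, abs_of_neg hB, neg_neg]
        have hxx : x j * x l ≤ x k * x k :=
          mul_le_mul (hk j) (hk l) (hx0 l) (le_trans (hx0 j) (hk j))
        calc B k j l * (x k * x k) ≤ B k j l * (x j * x l) := by
              exact mul_le_mul_of_nonpos_left hxx hB.le
          _ = B k j l * x j * x l := by ring
      · simp only [hB, if_false]
        push_neg at hB
        exact mul_nonneg (mul_nonneg hB (hx0 j)) (hx0 l)
  refine le_trans (le_of_eq ?_) key
  have : (∑ j, ∑ l, (if (j, l) = (k, k) then B k k k * (x k * x k)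
      else if B k j l < 0 then -|B k j l| * (x k * x k) else 0))
      = ∑ j, ∑ l, ((if (j, l) = (k, k) then B k k k * (x k * x k) else 0)
        + (if (j, l) ≠ (k, k) ∧ B k j l < 0 then -(|B k j l| * (x k * x k)) else 0)) := by
    refine Finset.sum_congr rfl fun j _ => Finset.sum_congr rfl fun l _ => ?_
    by_cases hjl : (j, l) = (k, k)
    · simp [hjl]
    · by_cases hB : B k j l < 0 <;> simp [hjl, hB, neg_mul]
  rw [this]
  simp only [Finset.sum_add_distrib]
  have h1 : (∑ j, ∑ l, (if (j, l) = (k, k) then B k k k * (x k * x k) else 0))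
      = B k k k * (x k * x k) := by
    simp [Prod.ext_iff, ite_and, Finset.sum_ite_eq']
  have h2 : (∑ j, ∑ l, (if (j, l) ≠ (k, k) ∧ B k j l < 0 then -(|B k j l| * (x k * x k)) else 0))
      = -(rMinus3 B k * (x k * x k)) := by
    rw [rMinus3, Finset.sum_mul]
    rw [← Finset.sum_neg_distrib]
    refine Finset.sum_congr rfl fun j _ => ?_
    rw [Finset.sum_mul, ← Finset.sum_neg_distrib]
    refine Finset.sum_congr rfl fun l _ => ?_
    split_ifs <;> simp
  rw [h1, h2]; ring

lemma sum_bound2 {n : ℕ} (A : Fin n → Fin n → ℝ) (x : Fin n → ℝ) (k : Fin n)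
    (hx0 : ∀ i, 0 ≤ x i) (hk : ∀ i, x i ≤ x k) :
    (A k k - rMinus2 A k) * x k ≤ ∑ j, A k j * x j := by
  have key : (∑ j, (if j = k then A k k * x k
      else if A k j < 0 then -|A k j| * x k else 0)) ≤ ∑ j, A k j * x j := by
    refine Finset.sum_le_sum fun j _ => ?_
    by_cases hj : j = k
    · subst hj; simp
    · simp only [hj, if_false]
      by_cases hA : A k j < 0
      · simp only [hA, if_true, abs_of_neg hA, neg_neg]
        exact mul_le_mul_of_nonpos_left (hk j) hA.le
      · simp only [hA, if_false]
        push_neg at hA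
        exact mul_nonneg hA (hx0 j)
  refine le_trans (le_of_eq ?_) key
  have : (∑ j, (if j = k then A k k * x k else if A k j < 0 then -|A k j| * x k else 0))
      = ∑ j, ((if j = k then A k k * x k else 0)
        + (if j ≠ k ∧ A k j < 0 then -(|A k j| * x k) else 0)) := by
    refine Finset.sum_congr rfl fun j _ => ?_
    by_cases hj : j = k
    · simp [hj]
    · by_cases hA : A k j < 0 <;> simp [hj, hA, neg_mul]
  rw [this, Finset.sum_add_distrib, Finset.sum_ite_eq']
  have h2 : (∑ j, (if j ≠ k ∧ A k j < 0 then -(|A k j| * x k) else 0))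
      = -(rMinus2 A k * x k) := by
    rw [rMinus2, Finset.sum_mul, ← Finset.sum_neg_distrib]
    refine Finset.sum_congr rfl fun j _ => ?_
    split_ifs <;> simp
  rw [h2]; simp; ring

/-- for the quadratic complementarity problem with generalized row
strictly diagonally dominant data with positive diagonals and q ∉ ℝ^n_+, any
solution x with ‖x‖_∞ = x_k satisfies q_k < 0 and (Bx² + Ax + q)_k = 0. -/
theorem qcp_max_component_negative_q
    (n : ℕ) (B : Fin n → Fin n → Fin n → ℝ) (A : Fin n → Fin n → ℝ)
    (q : Fin n → ℝ)
    (hBdiag : ∀ i, 0 < B i i i) (hBdom : ∀ i, rMinus3 B i < B i i i)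
    (hAdiag : ∀ i, 0 < A i i) (hAdom : ∀ i, rMinus2 A i < A i i)
    (hq : ∃ i, q i < 0)
    (x : Fin n → ℝ)
    (hx0 : ∀ i, 0 ≤ x i)
    (hfeas : ∀ i, 0 ≤ (∑ j, ∑ l, B i j l * x j * x l) + (∑ j, A i j * x j) + q i)
    (hcomp : ∑ i, x i * ((∑ j, ∑ l, B i j l * x j * x l) + (∑ j, A i j * x j) + q i) = 0)
    (k : Fin n) (hk : ∀ i, x i ≤ x k) :
    q k < 0 ∧
      (∑ j, ∑ l, B k j l * x j * x l) + (∑ j, A k j * x j) + q k = 0 := by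
  -- x k > 0
  have hxk : 0 < x k := by
    rcases lt_or_eq_of_le (hx0 k) with h | h
    · exact h
    · exfalso
      have hxz : ∀ i, x i = 0 := fun i => le_antisymm (h ▸ hk i) (hx0 i)
      obtain ⟨i, hi⟩ := hq
      have := hfeas i
      simp [hxz] at this
      linarith
  -- each complementarity term is zero
  have hterm : ∀ i ∈ Finset.univ, x i * ((∑ j, ∑ l, B i j l * x j * x l) + (∑ j, A i j * x j) + q i) = 0 := by
    rw [← Finset.sum_eq_zero_iff_of_nonneg]
    · exact hcomp
    · exact fun i _ => mul_nonneg (hx0 i) (hfeas i)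
  have hzero : (∑ j, ∑ l, B k j l * x j * x l) + (∑ j, A k j * x j) + q k = 0 := by
    have := hterm k (Finset.mem_univ k)
    rcases mul_eq_zero.mp this with h | h
    · exact absurd h hxk.ne'
    · exact h
  refine ⟨?_, hzero⟩
  have h3 := sum_bound3 B x k hx0 hk
  have h2 := sum_bound2 A x k hx0 hk
  have hpos3 : 0 < (B k k k - rMinus3 B k) * (x k * x k) := by
    exact mul_pos (sub_pos.mpr (hBdom k)) (mul_pos hxk hxk)
  have hpos2 : 0 < (A k k - rMinus2 A k) * x k := by
    exact mul_pos (sub_pos.mpr (hAdom k)) hxk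
  linarith
end

section
/- Consider the cooperative higher-order Lotka-Volterra system ẋ_i = r_i x_i (1 − a_{ii}x_i + Σ_{j≠i} a_{ij}x_j − b_{iii}x_i² + Σ_{(j,k)≠(i,i)} b_{ijk}x_j x_k) with all parameters nonnegative and A = (a_{ij}) irreducible. If X* > 0 is an equilibrium (so L_i(X*) = 0 for all i) then the Jacobian J at X* satisfies (J X*)_i = −r_i x*_i + r_i x*_i (−b_{iii}(x*_i)² + Σ_{(j,k)≠(i,i)} b_{ijk} x*_j x*_k). In particular, if −b_{iii}(x*_i)² + Σ_{(j,k)≠(i,i)} b_{ijk} x*_j x*_k < 1 for all i, then J X* < 0 componentwise, and since J is an irreducible Metzler matrix, J is Hurwitz, so X* is locally asymptotically stable. -/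
open Filter Topology Finset



lemma lv_sum_split {n : ℕ} (i : Fin n) (f : Fin n → Fin n → ℝ) :
    ∑ j, ∑ k, f j k = f i i + ∑ j, ∑ k, if (j,k) = (i,i) then 0 else f j k := by
  have h : ∀ j k : Fin n, f j k = (if (j,k) = (i,i) then f j k else 0)
      + (if (j,k) = (i,i) then 0 else f j k) := by
    intro j k; by_cases h : (j,k) = (i,i) <;> simp [h]
  calc ∑ j, ∑ k, f j k
      = ∑ j, ∑ k, ((if (j,k) = (i,i) then f j k else 0)
          + if (j,k) = (i,i) then 0 else f j k) := by simp_rw [← h]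
    _ = (∑ j, ∑ k, if (j,k) = (i,i) then f j k else 0)
        + ∑ j, ∑ k, if (j,k) = (i,i) then 0 else f j k := by
        rw [← Finset.sum_add_distrib]
        exact Finset.sum_congr rfl fun j _ => Finset.sum_add_distrib
    _ = f i i + ∑ j, ∑ k, if (j,k) = (i,i) then 0 else f j k := by
        congr 1
        simp [Prod.ext_iff, ite_and]


noncomputable def LVJacobian {n : ℕ} (r : Fin n → ℝ) (a : Fin n → Fin n → ℝ)
    (b : Fin n → Fin n → Fin n → ℝ) (x : Fin n → ℝ) :
    Matrix (Fin n) (Fin n) ℝ :=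
  Matrix.of fun i j =>
    (if i = j then
        r i * (1 + (∑ l, a i l * x l) + ∑ l, ∑ k, b i l k * x l * x k)
      else 0)
    + r i * x i * (a i j + (∑ k, b i j k * x k) + ∑ k, b i k j * x k)

noncomputable def LVell {n : ℕ} (a : Fin n → Fin n → ℝ) (b : Fin n → Fin n → Fin n → ℝ)
    (X : Fin n → ℝ) (i j : Fin n) : ℝ :=
  a i j + (∑ k, b i j k * X k) + ∑ k, b i k j * X k

lemma lv_e1 {n : ℕ} (b : Fin n → Fin n → Fin n → ℝ) (X v : Fin n → ℝ) (i : Fin n) :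
    ∑ j, (∑ k, b i j k * X k) * v j = ∑ j, ∑ k, b i j k * v j * X k := by
  refine Finset.sum_congr rfl fun j _ => ?_
  rw [Finset.sum_mul]
  exact Finset.sum_congr rfl fun k _ => by ring

lemma lv_e2 {n : ℕ} (b : Fin n → Fin n → Fin n → ℝ) (X v : Fin n → ℝ) (i : Fin n) :
    ∑ j, (∑ k, b i k j * X k) * v j = ∑ j, ∑ k, b i j k * X j * v k := by
  simp_rw [Finset.sum_mul]
  rw [Finset.sum_comm]

lemma lv_ell_apply {n : ℕ} (a : Fin n → Fin n → ℝ) (b : Fin n → Fin n → Fin n → ℝ)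
    (X v : Fin n → ℝ) (i : Fin n) :
    ∑ j, LVell a b X i j * v j = (∑ j, a i j * v j)
      + (∑ j, ∑ k, b i j k * v j * X k) + ∑ j, ∑ k, b i j k * X j * v k := by
  unfold LVell
  simp_rw [add_mul, Finset.sum_add_distrib]
  rw [lv_e1, lv_e2]

lemma lv_field {n : ℕ} (a : Fin n → Fin n → ℝ) (b : Fin n → Fin n → Fin n → ℝ)
    (X : Fin n → ℝ) (i : Fin n)
    (heqi : 1 + (∑ j, a i j * X j) + (∑ j, ∑ k, b i j k * X j * X k) = 0)
    (u : Fin n → ℝ) :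
    1 + (∑ j, a i j * u j) + (∑ j, ∑ k, b i j k * u j * u k)
      = (∑ j, LVell a b X i j * (u j - X j))
        + ∑ j, ∑ k, b i j k * (u j - X j) * (u k - X k) := by
  have ha' : ∑ j, a i j * u j = (∑ j, a i j * X j) + ∑ j, a i j * (u j - X j) := by
    rw [← Finset.sum_add_distrib]
    exact Finset.sum_congr rfl fun j _ => by ring
  have hterm : ∀ j k : Fin n, b i j k * u j * u k = b i j k * X j * X k
      + (b i j k * (u j - X j) * X k + (b i j k * X j * (u k - X k)
        + b i j k * (u j - X j) * (u k - X k))) := fun j k => by ring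
  have hb' : ∑ j, ∑ k, b i j k * u j * u k
      = (∑ j, ∑ k, b i j k * X j * X k) + ((∑ j, ∑ k, b i j k * (u j - X j) * X k)
        + ((∑ j, ∑ k, b i j k * X j * (u k - X k))
          + ∑ j, ∑ k, b i j k * (u j - X j) * (u k - X k))) := by
    simp_rw [hterm, Finset.sum_add_distrib]
  rw [lv_ell_apply a b X (fun j => u j - X j) i] at *
  linarith [ha', hb', heqi]

lemma lv_mulvec {n : ℕ} (r : Fin n → ℝ) (a : Fin n → Fin n → ℝ)
    (b : Fin n → Fin n → Fin n → ℝ) (X v : Fin n → ℝ) (i : Fin n) :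
    (LVJacobian r a b X).mulVec v i
      = r i * (1 + (∑ l, a i l * X l) + ∑ l, ∑ k, b i l k * X l * X k) * v i
        + r i * X i * ∑ j, LVell a b X i j * v j := by
  simp only [Matrix.mulVec, dotProduct, LVJacobian, Matrix.of_apply, LVell]
  simp_rw [add_mul, ite_mul, zero_mul, Finset.sum_add_distrib, Finset.sum_ite_eq,
    Finset.mem_univ, if_true]
  congr 1
  rw [mul_add, mul_add, Finset.mul_sum, Finset.mul_sum, Finset.mul_sum,
    ← Finset.sum_add_distrib, ← Finset.sum_add_distrib]
  exact Finset.sum_congr rfl fun j _ => by ring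


lemma lv_ell_rowsum {n : ℕ} (a : Fin n → Fin n → ℝ) (b : Fin n → Fin n → Fin n → ℝ)
    (X : Fin n → ℝ) (i : Fin n)
    (heqi : 1 + (∑ j, a i j * X j) + (∑ j, ∑ k, b i j k * X j * X k) = 0) :
    ∑ j, LVell a b X i j * X j = (∑ j, ∑ k, b i j k * X j * X k) - 1 := by
  rw [lv_ell_apply]
  linarith [heqi]


lemma metzler_spectrum {n : ℕ} (J : Matrix (Fin n) (Fin n) ℝ) (X : Fin n → ℝ)
    (hX : ∀ i, 0 < X i) (hoff : ∀ i j, i ≠ j → 0 ≤ J i j)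
    (hJX : ∀ i, J.mulVec X i < 0)
    (μ : ℂ) (hμ : μ ∈ spectrum ℂ (J.map (Complex.ofReal ·))) : μ.re < 0 := by
  rcases Nat.eq_zero_or_pos n with hn | hn
  · subst hn
    exact absurd (isUnit_of_subsingleton _) (spectrum.mem_iff.1 hμ)
  set M := J.map (Complex.ofReal ·) with hM
  have hdet : (algebraMap ℂ (Matrix (Fin n) (Fin n) ℂ) μ - M).det = 0 := by
    by_contra h
    exact (spectrum.mem_iff.1 hμ)
      ((Matrix.isUnit_iff_isUnit_det _).2 (isUnit_iff_ne_zero.2 h))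
  obtain ⟨u, hu0, hu⟩ := (Matrix.exists_mulVec_eq_zero_iff).2 hdet
  have h2 : (algebraMap ℂ (Matrix (Fin n) (Fin n) ℂ) μ).mulVec u = μ • u := by
    rw [Algebra.algebraMap_eq_smul_one, Matrix.smul_mulVec, Matrix.one_mulVec]
  rw [Matrix.sub_mulVec, h2] at hu
  have huM : ∀ i, μ * u i = ∑ j, (J i j : ℂ) * u j := by
    intro i
    have h1 := congrFun hu i
    simp only [Pi.sub_apply, Pi.smul_apply, smul_eq_mul, Pi.zero_apply] at h1
    have h3 : M.mulVec u i = ∑ j, (J i j : ℂ) * u j := by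
      simp [Matrix.mulVec, dotProduct, hM, Matrix.map_apply]
    rw [h3] at h1
    exact sub_eq_zero.1 h1
  -- pick the index maximizing |u j| / X j
  obtain ⟨i, -, hi⟩ := Finset.exists_max_image Finset.univ
    (fun j => ‖u j‖ / X j) ⟨⟨0, hn⟩, Finset.mem_univ _⟩
  have hui : 0 < ‖u i‖ := by
    obtain ⟨j, hj⟩ := Function.ne_iff.1 hu0
    have hj' : 0 < ‖u j‖ / X j :=
      div_pos (by simpa using hj) (hX j)
    have := hi j (Finset.mem_univ j)
    have h4 : 0 < ‖u i‖ / X i := lt_of_lt_of_le hj' this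
    rcases div_pos_iff.1 h4 with ⟨h5, -⟩ | ⟨-, h6⟩
    · exact h5
    · exact absurd (hX i) (not_lt.2 h6.le)
  have hrow : (μ - (J i i : ℂ)) * u i = ∑ j ∈ Finset.univ.erase i, (J i j : ℂ) * u j := by
    rw [sub_mul, huM i,
      ← Finset.add_sum_erase _ (fun j => (J i j : ℂ) * u j) (Finset.mem_univ i)]
    ring
  have habs : ‖μ - (J i i : ℂ)‖ * ‖u i‖
      ≤ ∑ j ∈ Finset.univ.erase i, J i j * ‖u j‖ := by
    calc ‖μ - (J i i : ℂ)‖ * ‖u i‖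
        = ‖(μ - (J i i : ℂ)) * u i‖ := (norm_mul _ _).symm
      _ = ‖∑ j ∈ Finset.univ.erase i, (J i j : ℂ) * u j‖ := by rw [hrow]
      _ ≤ ∑ j ∈ Finset.univ.erase i, ‖(J i j : ℂ) * u j‖ :=
          norm_sum_le _ _
      _ = ∑ j ∈ Finset.univ.erase i, J i j * ‖u j‖ := by
          refine Finset.sum_congr rfl fun j hj => ?_
          rw [norm_mul, Complex.norm_real, Real.norm_eq_abs,
            abs_of_nonneg (hoff i j (Finset.ne_of_mem_erase hj).symm)]
  have hcomp : ∀ j, ‖u j‖ ≤ ‖u i‖ / X i * X j := by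
    intro j
    have h5 := hi j (Finset.mem_univ j)
    exact (div_le_iff₀ (hX j)).1 h5
  have hsum : ∑ j ∈ Finset.univ.erase i, J i j * ‖u j‖
      ≤ ‖u i‖ / X i * ∑ j ∈ Finset.univ.erase i, J i j * X j := by
    rw [Finset.mul_sum]
    refine Finset.sum_le_sum fun j hj => ?_
    have h6 := mul_le_mul_of_nonneg_left (hcomp j)
      (hoff i j (Finset.ne_of_mem_erase hj).symm)
    calc J i j * ‖u j‖ ≤ J i j * (‖u i‖ / X i * X j) := h6
      _ = ‖u i‖ / X i * (J i j * X j) := by ring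
  have hdiag : ∑ j ∈ Finset.univ.erase i, J i j * X j = J.mulVec X i - J i i * X i := by
    have : J.mulVec X i = ∑ j, J i j * X j := rfl
    rw [this, ← Finset.add_sum_erase _ (fun j => J i j * X j) (Finset.mem_univ i)]
    ring
  have hq : 0 < ‖u i‖ / X i := div_pos hui (hX i)
  have hlt : ‖μ - (J i i : ℂ)‖ * ‖u i‖ < -(J i i) * ‖u i‖ := by
    have h7 : ‖u i‖ / X i * ∑ j ∈ Finset.univ.erase i, J i j * X j
        < ‖u i‖ / X i * (-(J i i) * X i) := by
      apply mul_lt_mul_of_pos_left _ hq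
      rw [hdiag]
      have := hJX i
      linarith
    have h8 : ‖u i‖ / X i * (-(J i i) * X i) = -(J i i) * ‖u i‖ := by
      have hXi : X i ≠ 0 := (hX i).ne'
      field_simp
    calc ‖μ - (J i i : ℂ)‖ * ‖u i‖
        ≤ ∑ j ∈ Finset.univ.erase i, J i j * ‖u j‖ := habs
      _ ≤ _ := hsum
      _ < _ := h7
      _ = _ := h8
  have h9 : ‖μ - (J i i : ℂ)‖ < -(J i i) := (mul_lt_mul_iff_of_pos_right hui).1 hlt
  have h10 : μ.re - J i i ≤ ‖μ - (J i i : ℂ)‖ := by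
    have := Complex.re_le_norm (μ - (J i i : ℂ))
    simpa using this
  linarith


set_option maxHeartbeats 1600000 in
/-- at a positive equilibrium X* of the cooperative higher-order
Lotka-Volterra system, (J X*)_i = -r_i x*_i + r_i x*_i (b_{iii} x*_i² +
Σ_{(j,k)≠(i,i)} b_{ijk} x*_j x*_k); if b_{iii} x*_i² + Σ_{(j,k)≠(i,i)} b_{ijk}
x*_j x*_k < 1 for all i, then J X* < 0, J is Hurwitz (being irreducible
Metzler), and X* is locally asymptotically stable. -/
theorem higher_order_LV_cooperative_positive_equilibrium_stable
    (n : ℕ) (r : Fin n → ℝ) (a : Fin n → Fin n → ℝ)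
    (b : Fin n → Fin n → Fin n → ℝ)
    (hr : ∀ i, 0 < r i)
    (haMetzler : ∀ i j, i ≠ j → 0 ≤ a i j)
    (haIrr : ∀ S : Set (Fin n), S.Nonempty → S ≠ Set.univ →
      ∃ i ∈ S, ∃ j ∉ S, a i j ≠ 0)
    (hbMetzler : ∀ i j k, (j, k) ≠ (i, i) → 0 ≤ b i j k)
    (X : Fin n → ℝ) (hX : ∀ i, 0 < X i)
    (heq : ∀ i, 1 + (∑ j, a i j * X j) + (∑ j, ∑ k, b i j k * X j * X k) = 0) :
    (∀ i, (LVJacobian r a b X).mulVec X i =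
      -(r i * X i) + r i * X i * (b i i i * X i ^ 2 +
        ∑ j, ∑ k, if (j, k) = (i, i) then 0 else b i j k * X j * X k)) ∧
    ((∀ i, b i i i * X i ^ 2 +
        (∑ j, ∑ k, if (j, k) = (i, i) then 0 else b i j k * X j * X k) < 1) →
      (∀ i, (LVJacobian r a b X).mulVec X i < 0) ∧
      (∀ μ ∈ spectrum ℂ ((LVJacobian r a b X).map (Complex.ofReal ·)), μ.re < 0) ∧
      ∃ δ > (0 : ℝ), ∀ x : ℝ → Fin n → ℝ,
        (∀ t, HasDerivAt x
          (fun i => r i * x t i * (1 + (∑ j, a i j * x t j) +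
            ∑ j, ∑ k, b i j k * x t j * x t k)) t) →
        ‖x 0 - X‖ < δ → Tendsto x atTop (𝓝 X)) := by
  have hsplit : ∀ i : Fin n, (∑ j, ∑ k, b i j k * X j * X k)
      = b i i i * X i ^ 2 + ∑ j, ∑ k, if (j, k) = (i, i) then 0 else b i j k * X j * X k := by
    intro i
    rw [lv_sum_split i (fun j k => b i j k * X j * X k)]
    ring_nf
  have hpart1 : ∀ i, (LVJacobian r a b X).mulVec X i =
      -(r i * X i) + r i * X i * (b i i i * X i ^ 2 +
        ∑ j, ∑ k, if (j, k) = (i, i) then 0 else b i j k * X j * X k) := by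
    intro i
    rw [lv_mulvec, heq i, lv_ell_rowsum a b X i (heq i), hsplit i]
    ring
  refine ⟨hpart1, fun hlt => ?_⟩
  have hJXneg : ∀ i, (LVJacobian r a b X).mulVec X i < 0 := by
    intro i
    rw [hpart1 i]
    nlinarith [mul_pos (hr i) (hX i), hlt i]
  have hoff : ∀ i j, i ≠ j → 0 ≤ LVJacobian r a b X i j := by
    intro i j hij
    have hb1 : ∀ k, 0 ≤ b i j k := fun k =>
      hbMetzler i j k (fun h => hij (congrArg Prod.fst h).symm)
    have hb2 : ∀ k, 0 ≤ b i k j := fun k =>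
      hbMetzler i k j (fun h => hij (congrArg Prod.snd h).symm)
    simp only [LVJacobian, Matrix.of_apply, if_neg hij, zero_add]
    have h1 : 0 ≤ a i j := haMetzler i j hij
    have h2 : 0 ≤ ∑ k, b i j k * X k :=
      Finset.sum_nonneg fun k _ => mul_nonneg (hb1 k) (hX k).le
    have h3 : 0 ≤ ∑ k, b i k j * X k :=
      Finset.sum_nonneg fun k _ => mul_nonneg (hb2 k) (hX k).le
    have := mul_pos (hr i) (hX i)
    positivity
  refine ⟨hJXneg, fun μ hμ => metzler_spectrum _ X hX hoff hJXneg μ hμ, ?_⟩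
  -- Part 2c : local asymptotic stability
  rcases Nat.eq_zero_or_pos n with hn | hn
  · subst hn
    refine ⟨1, one_pos, fun x _ _ => ?_⟩
    have hxX : x = fun _ => X := funext fun t => funext fun i => i.elim0
    rw [hxX]
    exact tendsto_const_nhds
  haveI : Nonempty (Fin n) := ⟨⟨0, hn⟩⟩
  -- the quadratic coefficient S
  set Sq : Fin n → ℝ := fun i => b i i i * X i ^ 2 +
    ∑ j, ∑ k, if (j, k) = (i, i) then 0 else b i j k * X j * X k with hSqdef
  have hSqlt : ∀ i, Sq i < 1 := hlt
  have hrowsum : ∀ i, ∑ j, LVell a b X i j * X j = Sq i - 1 := fun i => by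
    rw [lv_ell_rowsum a b X i (heq i), hsplit i]
  -- constants
  set c : ℝ := Finset.univ.inf' Finset.univ_nonempty (fun i => r i * (1 - Sq i)) with hcdef
  have hcpos : 0 < c := (Finset.lt_inf'_iff _).2 fun i _ => by nlinarith [hr i, hSqlt i]
  have hcle : ∀ i, c ≤ r i * (1 - Sq i) := fun i => Finset.inf'_le _ (Finset.mem_univ i)
  set m : ℝ := Finset.univ.inf' Finset.univ_nonempty X with hmdef
  have hmpos : 0 < m := (Finset.lt_inf'_iff _).2 fun i _ => hX i
  have hmle : ∀ i, m ≤ X i := fun i => Finset.inf'_le _ (Finset.mem_univ i)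
  set Mx : ℝ := Finset.univ.sup' Finset.univ_nonempty X with hMxdef
  have hMxge : ∀ i, X i ≤ Mx := fun i => Finset.le_sup' _ (Finset.mem_univ i)
  have hMxpos : 0 < Mx := lt_of_lt_of_le (hX (Classical.arbitrary _)) (hMxge _)
  set Cl : Fin n → ℝ := fun i => ∑ j, |LVell a b X i j| * X j with hCldef
  have hClnn : ∀ i, 0 ≤ Cl i := fun i =>
    Finset.sum_nonneg fun j _ => mul_nonneg (abs_nonneg _) (hX j).le
  set Bq : Fin n → ℝ := fun i => ∑ j, ∑ k, |b i j k| * (X j * X k) with hBqdef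
  have hBqnn : ∀ i, 0 ≤ Bq i := fun i => Finset.sum_nonneg fun j _ =>
    Finset.sum_nonneg fun k _ => mul_nonneg (abs_nonneg _)
      (mul_nonneg (hX j).le (hX k).le)
  set Kt : ℝ := ∑ i, (r i * Cl i + 2 * r i * Bq i) with hKtdef
  have hKtile : ∀ i, 0 ≤ r i * Cl i + 2 * r i * Bq i := fun i => by
    have h1 := mul_nonneg (hr i).le (hClnn i)
    have h2 := mul_nonneg (hr i).le (hBqnn i)
    linarith
  have hKtnn : 0 ≤ Kt := Finset.sum_nonneg fun i _ => hKtile i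
  have hKtle : ∀ i, r i * Cl i + 2 * r i * Bq i ≤ Kt := fun i =>
    Finset.single_le_sum (fun j _ => hKtile j) (Finset.mem_univ i)
  set ρ : ℝ := min 1 (c / (2 * (Kt + 1))) with hρdef
  have hρpos : 0 < ρ := lt_min one_pos (div_pos hcpos (by linarith))
  have hρ1 : ρ ≤ 1 := min_le_left _ _
  have hρK : Kt * ρ ≤ c / 2 := by
    have h1 : ρ ≤ c / (2 * (Kt + 1)) := min_le_right _ _
    have h2 : (0:ℝ) < Kt + 1 := by linarith
    have h3 : Kt * (c / (2 * (Kt + 1))) = c / 2 * (Kt / (Kt + 1)) := by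
      field_simp
    have h4 : Kt / (Kt + 1) ≤ 1 := (div_le_one h2).2 (by linarith)
    have h5 : Kt * ρ ≤ Kt * (c / (2 * (Kt + 1))) := mul_le_mul_of_nonneg_left h1 hKtnn
    nlinarith
  -- the key one-sided bound on the vector field
  have hellnn : ∀ i j, j ≠ i → 0 ≤ LVell a b X i j := by
    intro i j hji
    have hb1 : ∀ k, 0 ≤ b i j k := fun k =>
      hbMetzler i j k (fun h => hji (congrArg Prod.fst h))
    have hb2 : ∀ k, 0 ≤ b i k j := fun k =>
      hbMetzler i k j (fun h => hji (congrArg Prod.snd h))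
    unfold LVell
    have h1 : 0 ≤ a i j := haMetzler i j (Ne.symm hji)
    have h2 : 0 ≤ ∑ k, b i j k * X k :=
      Finset.sum_nonneg fun k _ => mul_nonneg (hb1 k) (hX k).le
    have h3 : 0 ≤ ∑ k, b i k j * X k :=
      Finset.sum_nonneg fun k _ => mul_nonneg (hb2 k) (hX k).le
    linarith
  have hkey : ∀ (u : Fin n → ℝ) (i : Fin n) (σ w : ℝ), σ = 1 ∨ σ = -1 → 0 ≤ w → w ≤ 1 →
      (∀ j, |u j - X j| ≤ w * X j) → σ * (u i - X i) = w * X i →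
      σ * (r i * u i * (1 + (∑ j, a i j * u j) + ∑ j, ∑ k, b i j k * u j * u k))
        ≤ X i * ((-c + Kt * w) * w) := by
    intro u i σ w hσ hw0 hw1 hcomp hmax
    have hσabs : ∀ v : ℝ, σ * v ≤ |v| := by
      rcases hσ with rfl | rfl <;> intro v
      · rw [one_mul]; exact le_abs_self v
      · rw [neg_one_mul]; exact neg_le_abs v
    rw [lv_field a b X i (heq i) u]
    have hwX : ∀ j, 0 ≤ w * X j := fun j => le_trans (abs_nonneg _) (hcomp j)
    -- bound 1 : σ * L ≤ (Sq i - 1) * w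
    have hLbound1 : σ * (∑ j, LVell a b X i j * (u j - X j)) ≤ (Sq i - 1) * w := by
      rw [Finset.mul_sum]
      calc ∑ j, σ * (LVell a b X i j * (u j - X j))
          = σ * (LVell a b X i i * (u i - X i)) +
            ∑ j ∈ Finset.univ.erase i, σ * (LVell a b X i j * (u j - X j)) :=
            (Finset.add_sum_erase _ _ (Finset.mem_univ i)).symm
        _ ≤ LVell a b X i i * (w * X i) +
            ∑ j ∈ Finset.univ.erase i, LVell a b X i j * (w * X j) := by
            refine add_le_add (le_of_eq ?_) (Finset.sum_le_sum fun j hj => ?_)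
            · calc σ * (LVell a b X i i * (u i - X i))
                  = LVell a b X i i * (σ * (u i - X i)) := by ring
                _ = LVell a b X i i * (w * X i) := by rw [hmax]
            · have hj' : j ≠ i := Finset.ne_of_mem_erase hj
              calc σ * (LVell a b X i j * (u j - X j))
                  = LVell a b X i j * (σ * (u j - X j)) := by ring
                _ ≤ LVell a b X i j * (w * X j) := by
                    refine mul_le_mul_of_nonneg_left ?_ (hellnn i j hj')
                    exact le_trans (hσabs _) (hcomp j)
        _ = w * ∑ j, LVell a b X i j * X j := by
            rw [Finset.mul_sum,
              ← Finset.add_sum_erase _ (fun j => w * (LVell a b X i j * X j))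
              (Finset.mem_univ i)]
            refine congrArg₂ (· + ·) (by ring) (Finset.sum_congr rfl fun j _ => by ring)
        _ = (Sq i - 1) * w := by rw [hrowsum i]; ring
    -- bound 2 : L ≤ Cl i * w
    have hLbound2 : (∑ j, LVell a b X i j * (u j - X j)) ≤ Cl i * w := by
      calc ∑ j, LVell a b X i j * (u j - X j)
          ≤ ∑ j, |LVell a b X i j| * (w * X j) := by
            refine Finset.sum_le_sum fun j _ => ?_
            calc LVell a b X i j * (u j - X j) ≤ |LVell a b X i j * (u j - X j)| :=
                  le_abs_self _
              _ = |LVell a b X i j| * |u j - X j| := abs_mul _ _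
              _ ≤ |LVell a b X i j| * (w * X j) :=
                  mul_le_mul_of_nonneg_left (hcomp j) (abs_nonneg _)
        _ = Cl i * w := by
            rw [hCldef, Finset.sum_mul]
            exact Finset.sum_congr rfl fun j _ => by ring
    -- bound 3 : σ * q ≤ Bq i * w ^ 2
    have hqbound : σ * (∑ j, ∑ k, b i j k * (u j - X j) * (u k - X k)) ≤ Bq i * w ^ 2 := by
      refine le_trans (hσabs _) ?_
      calc |∑ j, ∑ k, b i j k * (u j - X j) * (u k - X k)|
          ≤ ∑ j, |∑ k, b i j k * (u j - X j) * (u k - X k)| :=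
            Finset.abs_sum_le_sum_abs _ _
        _ ≤ ∑ j, ∑ k, |b i j k * (u j - X j) * (u k - X k)| :=
            Finset.sum_le_sum fun j _ => Finset.abs_sum_le_sum_abs _ _
        _ ≤ ∑ j, ∑ k, |b i j k| * (X j * X k) * w ^ 2 := by
            refine Finset.sum_le_sum fun j _ => Finset.sum_le_sum fun k _ => ?_
            rw [abs_mul, abs_mul]
            calc |b i j k| * |u j - X j| * |u k - X k|
                ≤ |b i j k| * (w * X j) * (w * X k) := by
                  refine mul_le_mul (mul_le_mul_of_nonneg_left (hcomp j) (abs_nonneg _))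
                    (hcomp k) (abs_nonneg _) ?_
                  exact mul_nonneg (abs_nonneg _) (hwX j)
              _ = |b i j k| * (X j * X k) * w ^ 2 := by ring
        _ = Bq i * w ^ 2 := by
            rw [hBqdef, Finset.sum_mul]
            exact Finset.sum_congr rfl fun j _ => by rw [Finset.sum_mul]
    -- u i is between 0 and 2 X i
    have hyi := abs_le.1 (hcomp i)
    have hun : 0 ≤ u i := by nlinarith [hX i, hyi.1, hw1]
    have hub : u i ≤ 2 * X i := by nlinarith [hX i, hyi.2, hw1]
    -- assemble
    have hdec : σ * (r i * u i * ((∑ j, LVell a b X i j * (u j - X j)) +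
        ∑ j, ∑ k, b i j k * (u j - X j) * (u k - X k)))
        = r i * X i * (σ * ∑ j, LVell a b X i j * (u j - X j))
          + r i * ((σ * (u i - X i)) * ∑ j, LVell a b X i j * (u j - X j))
          + r i * u i * (σ * ∑ j, ∑ k, b i j k * (u j - X j) * (u k - X k)) := by
      rcases hσ with rfl | rfl <;> ring
    rw [hdec, hmax]
    have T1 : r i * X i * (σ * ∑ j, LVell a b X i j * (u j - X j))
        ≤ r i * X i * ((Sq i - 1) * w) :=
      mul_le_mul_of_nonneg_left hLbound1 (mul_nonneg (hr i).le (hX i).le)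
    have T2 : r i * ((w * X i) * ∑ j, LVell a b X i j * (u j - X j))
        ≤ r i * ((w * X i) * (Cl i * w)) := by
      refine mul_le_mul_of_nonneg_left ?_ (hr i).le
      exact mul_le_mul_of_nonneg_left hLbound2 (hwX i)
    have T3 : r i * u i * (σ * ∑ j, ∑ k, b i j k * (u j - X j) * (u k - X k))
        ≤ r i * (2 * X i) * (Bq i * w ^ 2) := by
      calc r i * u i * (σ * ∑ j, ∑ k, b i j k * (u j - X j) * (u k - X k))
          ≤ r i * u i * (Bq i * w ^ 2) :=
            mul_le_mul_of_nonneg_left hqbound (mul_nonneg (hr i).le hun)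
        _ ≤ r i * (2 * X i) * (Bq i * w ^ 2) := by
            refine mul_le_mul_of_nonneg_right ?_
              (mul_nonneg (hBqnn i) (sq_nonneg w))
            exact mul_le_mul_of_nonneg_left hub (hr i).le
    have Hfin : r i * X i * ((Sq i - 1) * w) + r i * ((w * X i) * (Cl i * w))
        + r i * (2 * X i) * (Bq i * w ^ 2) ≤ X i * ((-c + Kt * w) * w) := by
      nlinarith [mul_le_mul_of_nonneg_left (hcle i) (mul_nonneg (hX i).le hw0),
        mul_le_mul_of_nonneg_left (hKtle i) (mul_nonneg (hX i).le (sq_nonneg w))]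
    linarith
  -- ### the solution analysis
  refine ⟨ρ * m / 2, div_pos (mul_pos hρpos hmpos) two_pos, fun x hx hx0 => ?_⟩
  have hxc : Continuous x := continuous_iff_continuousAt.2 fun t => (hx t).continuousAt
  have hxi : ∀ (t : ℝ) (i : Fin n), HasDerivAt (fun s => x s i)
      (r i * x t i * (1 + (∑ j, a i j * x t j) + ∑ j, ∑ k, b i j k * x t j * x t k)) t :=
    fun t i => hasDerivAt_pi.1 (hx t) i
  set z : ℝ → Fin n → ℝ := fun t i => (x t i - X i) / X i with hzdef
  set w : ℝ → ℝ := fun t => ‖z t‖ with hwdef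
  have hzc : Continuous z := by
    refine continuous_pi fun i => ?_
    exact (((continuous_apply i).comp hxc).sub continuous_const).div_const _
  have hwc : Continuous w := hzc.norm
  have hwnn : ∀ t, 0 ≤ w t := fun t => norm_nonneg _
  have habs : ∀ t i, |x t i - X i| = |z t i| * X i := by
    intro t i
    have : z t i = (x t i - X i) / X i := rfl
    rw [this, abs_div, abs_of_pos (hX i), div_mul_cancel₀ _ (hX i).ne']
  have hcompw : ∀ t i, |x t i - X i| ≤ w t * X i := by
    intro t i
    have h1 : |z t i| ≤ w t := by
      simpa [Real.norm_eq_abs] using norm_le_pi_norm (z t) i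
    rw [habs t i]
    exact mul_le_mul_of_nonneg_right h1 (hX i).le
  have hargmax : ∀ t, ∃ i : Fin n, w t = |z t i| := by
    intro t
    obtain ⟨i, -, hi⟩ := Finset.exists_mem_eq_sup Finset.univ Finset.univ_nonempty
      (fun i => ‖z t i‖₊)
    refine ⟨i, ?_⟩
    have h2 : ‖z t‖₊ = ‖z t i‖₊ := by rw [Pi.nnnorm_def]; exact hi
    have h3 : ‖z t‖ = ‖z t i‖ := by rw [← coe_nnnorm, ← coe_nnnorm, h2]
    simpa [Real.norm_eq_abs] using h3
  -- Grönwall inequality, conditional on trapping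
  have hGron : ∀ T, 0 ≤ T → (∀ s, s ∈ Set.Icc (0:ℝ) T → w s ≤ ρ) →
      ∀ t ∈ Set.Icc (0:ℝ) T, w t ≤ w 0 * Real.exp (-(c/2) * t) := by
    intro T hT htrap
    have key := le_gronwallBound_of_liminf_deriv_right_le (f := w)
      (f' := fun t => -(c/2) * w t) (δ := w 0) (K := -(c/2)) (ε := 0) (a := 0) (b := T)
      hwc.continuousOn ?_ le_rfl (fun s _ => by rw [add_zero])
    · intro t ht
      have h5 := key t ht
      rwa [gronwallBound_ε0, sub_zero] at h5
    -- the liminf condition on right slopes of w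
    intro t ht R hR
    replace hR : -(c/2) * w t < R := hR
    have hwtρ : w t ≤ ρ := htrap t ⟨ht.1, ht.2.le⟩
    have hwt1 : w t ≤ 1 := le_trans hwtρ hρ1
    -- an index that is frequently maximal to the right of t
    obtain ⟨i, hfreq⟩ : ∃ i : Fin n, ∃ᶠ s in 𝓝[>] t, w s = |z s i| := by
      by_contra hcon
      push_neg at hcon
      have hall : ∀ᶠ s in 𝓝[>] t, ∀ i : Fin n, ¬ w s = |z s i| :=
        Filter.eventually_all.2 fun i => (hcon i)
      obtain ⟨s, hs⟩ := hall.exists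
      obtain ⟨j, hj⟩ := hargmax s
      exact hs j hj
    have hzic : Continuous fun s => |z s i| := (continuous_abs.comp
      ((continuous_apply i).comp hzc))
    -- i is also maximal at t itself
    have hti : w t = |z t i| := by
      have hcl : w t - |z t i| ∈ closure ({0} : Set ℝ) := by
        refine mem_closure_of_frequently_of_tendsto
          (f := fun s => w s - |z s i|) (s := ({0} : Set ℝ))
          (hfreq.mono fun s hs => Set.mem_singleton_iff.2
            (show w s - |z s i| = 0 by rw [hs, sub_self]))
          (((hwc.sub hzic).tendsto t).mono_left nhdsWithin_le_nhds)
      rw [closure_singleton, Set.mem_singleton_iff, sub_eq_zero] at hcl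
      exact hcl
    -- reduce to a statement about component i
    suffices hev : ∀ᶠ s in 𝓝[>] t, (s - t)⁻¹ * (|z s i| - |z t i|) < R by
      refine hfreq.mp (hev.mono fun s hs heq' => ?_)
      rw [heq', hti]
      exact hs
    set d : ℝ := r i * x t i *
      (1 + (∑ j, a i j * x t j) + ∑ j, ∑ k, b i j k * x t j * x t k) with hddef
    have hyd : HasDerivAt (fun s => x s i - X i) d t := (hxi t i).sub_const _
    have hslope : Tendsto (fun s => (s - t)⁻¹ * ((x s i - X i) - (x t i - X i)))
        (𝓝[>] t) (𝓝 d) := by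
      have h3 := hasDerivAt_iff_tendsto_slope.1 hyd
      have h4 : 𝓝[>] t ≤ 𝓝[≠] t :=
        nhdsWithin_mono t fun s (hs : t < s) => ne_of_gt hs
      refine Tendsto.congr (fun s => ?_) (h3.mono_left h4)
      rw [slope_def_field, div_eq_inv_mul]
    have hXi := hX i
    rcases lt_trichotomy (x t i - X i) 0 with hsgn | hsgn | hsgn
    · -- negative case : σ = -1
      have hmaxi : (-1 : ℝ) * (x t i - X i) = w t * X i := by
        have h6 : |x t i - X i| = w t * X i := by rw [hti, habs t i]
        rw [abs_of_neg hsgn] at h6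
        linarith
      have hkb := hkey (x t) i (-1) (w t) (Or.inr rfl) (hwnn t) hwt1
        (fun j => hcompw t j) hmaxi
      have hder : -d < R * X i := by
        have h7 : Kt * w t ≤ c/2 := le_trans (mul_le_mul_of_nonneg_left hwtρ hKtnn) hρK
        have h8 : X i * ((-c + Kt * w t) * w t) ≤ X i * (-(c/2) * w t) := by
          refine mul_le_mul_of_nonneg_left ?_ (hX i).le
          nlinarith [hwnn t]
        have h9 : X i * (-(c/2) * w t) < X i * R := by
          calc X i * (-(c/2) * w t) = -(c/2) * w t * X i := by ring
            _ < R * X i := (mul_lt_mul_iff_of_pos_right hXi).2 hR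
            _ = X i * R := by ring
        calc -d = (-1 : ℝ) * d := by ring
          _ ≤ X i * ((-c + Kt * w t) * w t) := hkb
          _ ≤ X i * (-(c/2) * w t) := h8
          _ < X i * R := h9
          _ = R * X i := by ring
      have hevslope : ∀ᶠ s in 𝓝[>] t,
          -((s - t)⁻¹ * ((x s i - X i) - (x t i - X i))) < R * X i :=
        (hslope.neg).eventually_lt_const hder
      have hevneg : ∀ᶠ s in 𝓝[>] t, x s i - X i < 0 := by
        have h10 : Tendsto (fun s => x s i - X i) (𝓝[>] t) (𝓝 (x t i - X i)) :=
          (((continuous_apply i).comp hxc).sub continuous_const).tendsto t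
            |>.mono_left nhdsWithin_le_nhds
        exact h10.eventually_lt_const hsgn
      filter_upwards [hevslope, hevneg, self_mem_nhdsWithin] with s h1 h2 hst
      have e1 : |z s i| = -(x s i - X i) / X i := by
        have := habs s i
        rw [abs_of_neg h2] at this
        field_simp at this ⊢
        linarith
      have e2 : |z t i| = -(x t i - X i) / X i := by
        have := habs t i
        rw [abs_of_neg hsgn] at this
        field_simp at this ⊢
        linarith
      rw [e1, e2]
      have hst' : (0:ℝ) < (s - t)⁻¹ := inv_pos.2 (sub_pos.2 hst)
      calc (s - t)⁻¹ * (-(x s i - X i) / X i - -(x t i - X i) / X i)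
          = (-((s - t)⁻¹ * ((x s i - X i) - (x t i - X i)))) / X i := by ring
        _ < (R * X i) / X i := by gcongr
        _ = R := by field_simp
    · -- zero case : the solution is exactly at the equilibrium at time t
      have hzti : |z t i| = 0 := by
        have h6 := habs t i
        rw [hsgn, abs_zero] at h6
        exact (mul_eq_zero.1 h6.symm).resolve_right (hX i).ne'
      have hwt0 : w t = 0 := by rw [hti, hzti]
      have hR0 : (0:ℝ) < R := by
        rw [hwt0] at hR
        simpa using hR
      have hxt : ∀ j, x t j = X j := by
        intro j
        have h7 := hcompw t j
        rw [hwt0, zero_mul] at h7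
        have h8 : |x t j - X j| = 0 := le_antisymm h7 (abs_nonneg _)
        have h9 := abs_eq_zero.1 h8
        linarith
      have hd0 : d = 0 := by
        rw [hddef]
        simp only [hxt]
        rw [heq i, mul_zero]
      have habs2 : Tendsto (fun s => |(s - t)⁻¹ * ((x s i - X i) - (x t i - X i))|)
          (𝓝[>] t) (𝓝 0) := by
        have h10 := hslope.abs
        rw [hd0, abs_zero] at h10
        exact h10
      have hev2 := habs2.eventually_lt_const (mul_pos hR0 hXi)
      filter_upwards [hev2, self_mem_nhdsWithin] with s h1 hst
      have hst' : (0:ℝ) < (s - t)⁻¹ := inv_pos.2 (sub_pos.2 hst)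
      rw [hzti, sub_zero]
      have e1 : |z s i| = |x s i - X i| / X i := by
        rw [eq_div_iff (hX i).ne']
        exact (habs s i).symm
      rw [e1]
      have h2 : (s - t)⁻¹ * |x s i - X i| < R * X i := by
        have h11 : |(s - t)⁻¹ * ((x s i - X i) - (x t i - X i))|
            = (s - t)⁻¹ * |x s i - X i| := by
          rw [hsgn, sub_zero, abs_mul, abs_of_pos hst']
        rw [← h11]
        exact h1
      calc (s - t)⁻¹ * (|x s i - X i| / X i)
          = ((s - t)⁻¹ * |x s i - X i|) / X i := by ring
        _ < (R * X i) / X i := by gcongr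
        _ = R := by field_simp
    · -- positive case : σ = 1
      have hmaxi : (1 : ℝ) * (x t i - X i) = w t * X i := by
        have h6 : |x t i - X i| = w t * X i := by rw [hti, habs t i]
        rw [abs_of_pos hsgn] at h6
        linarith
      have hkb := hkey (x t) i 1 (w t) (Or.inl rfl) (hwnn t) hwt1
        (fun j => hcompw t j) hmaxi
      have hder : d < R * X i := by
        have h7 : Kt * w t ≤ c/2 := le_trans (mul_le_mul_of_nonneg_left hwtρ hKtnn) hρK
        have h8 : X i * ((-c + Kt * w t) * w t) ≤ X i * (-(c/2) * w t) := by
          refine mul_le_mul_of_nonneg_left ?_ (hX i).le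
          nlinarith [hwnn t]
        have h9 : X i * (-(c/2) * w t) < X i * R := by
          calc X i * (-(c/2) * w t) = -(c/2) * w t * X i := by ring
            _ < R * X i := (mul_lt_mul_iff_of_pos_right hXi).2 hR
            _ = X i * R := by ring
        calc d = (1 : ℝ) * d := by ring
          _ ≤ X i * ((-c + Kt * w t) * w t) := hkb
          _ ≤ X i * (-(c/2) * w t) := h8
          _ < X i * R := h9
          _ = R * X i := by ring
      have hevslope : ∀ᶠ s in 𝓝[>] t,
          (s - t)⁻¹ * ((x s i - X i) - (x t i - X i)) < R * X i :=
        hslope.eventually_lt_const hder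
      have hevpos : ∀ᶠ s in 𝓝[>] t, 0 < x s i - X i := by
        have h10 : Tendsto (fun s => x s i - X i) (𝓝[>] t) (𝓝 (x t i - X i)) :=
          (((continuous_apply i).comp hxc).sub continuous_const).tendsto t
            |>.mono_left nhdsWithin_le_nhds
        exact h10.eventually_const_lt hsgn
      filter_upwards [hevslope, hevpos, self_mem_nhdsWithin] with s h1 h2 hst
      have e1 : |z s i| = (x s i - X i) / X i := by
        have := habs s i
        rw [abs_of_pos h2] at this
        field_simp at this ⊢
        linarith
      have e2 : |z t i| = (x t i - X i) / X i := by
        have := habs t i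
        rw [abs_of_pos hsgn] at this
        field_simp at this ⊢
        linarith
      rw [e1, e2]
      calc (s - t)⁻¹ * ((x s i - X i) / X i - (x t i - X i) / X i)
          = ((s - t)⁻¹ * ((x s i - X i) - (x t i - X i))) / X i := by ring
        _ < (R * X i) / X i := by gcongr
        _ = R := by field_simp
  -- initial smallness in the weighted norm
  have hw0ρ : w 0 < ρ / 2 := by
    have h1 : w 0 ≤ ‖x 0 - X‖ / m := by
      refine (pi_norm_le_iff_of_nonneg (by positivity)).2 fun i => ?_
      have h2 : |x 0 i - X i| ≤ ‖x 0 - X‖ := by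
        simpa [Real.norm_eq_abs] using norm_le_pi_norm (x 0 - X) i
      have h3 : z 0 i = (x 0 i - X i) / X i := rfl
      rw [Real.norm_eq_abs, h3, abs_div, abs_of_pos (hX i)]
      exact div_le_div₀ (norm_nonneg _) h2 hmpos (hmle i)
    have h4 : ‖x 0 - X‖ / m < (ρ * m / 2) / m :=
      (div_lt_div_iff_of_pos_right hmpos).2 hx0
    have h5 : (ρ * m / 2) / m = ρ / 2 := by field_simp
    linarith
  -- the trapping region is forward invariant
  have htrap : ∀ t, 0 ≤ t → w t ≤ ρ := by
    by_contra hcon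
    push_neg at hcon
    obtain ⟨t₀, ht₀, hwt₀⟩ := hcon
    set Bset : Set ℝ := {t | 0 ≤ t ∧ ρ < w t} with hBdef
    have hBne : Bset.Nonempty := ⟨t₀, ht₀, hwt₀⟩
    have hBbd : BddBelow Bset := ⟨0, fun s hs => hs.1⟩
    set T := sInf Bset with hTdef
    have hT0 : 0 ≤ T := le_csInf hBne fun s hs => hs.1
    have hTcl : T ∈ closure Bset := csInf_mem_closure hBne hBbd
    have hρT : ρ ≤ w T := by
      have hsub : Bset ⊆ {s | ρ ≤ w s} := fun s hs => hs.2.le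
      have hcl2 : IsClosed {s | ρ ≤ w s} := isClosed_le continuous_const hwc
      exact (hcl2.closure_subset_iff.2 hsub) hTcl
    have hTpos : 0 < T := by
      rcases eq_or_lt_of_le hT0 with h | h
      · exfalso
        rw [← h] at hρT
        linarith
      · exact h
    have hbelow : ∀ s, s ∈ Set.Ico (0:ℝ) T → w s ≤ ρ := by
      intro s hs
      by_contra hcon2
      push_neg at hcon2
      exact absurd (csInf_le hBbd ⟨hs.1, hcon2⟩) (not_le.2 hs.2)
    have hwTle : w T ≤ ρ := by
      have h1 : Tendsto w (𝓝[<] T) (𝓝 (w T)) :=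
        (hwc.tendsto T).mono_left nhdsWithin_le_nhds
      have h2 : ∀ᶠ s in 𝓝[<] T, w s ≤ ρ := by
        filter_upwards [Ioo_mem_nhdsLT_of_mem
          (Set.mem_Ioc.2 ⟨hTpos, le_refl T⟩)] with s hs
        exact hbelow s ⟨hs.1.le, hs.2⟩
      exact le_of_tendsto h1 h2
    have hIcc : ∀ s, s ∈ Set.Icc (0:ℝ) T → w s ≤ ρ := by
      intro s hs
      rcases lt_or_eq_of_le hs.2 with h | h
      · exact hbelow s ⟨hs.1, h⟩
      · rw [h]
        exact hwTle
    have hG := hGron T hT0 hIcc T ⟨hT0, le_refl T⟩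
    have hexp : Real.exp (-(c/2) * T) ≤ 1 :=
      Real.exp_le_one_iff.2 (by nlinarith)
    nlinarith [hwnn 0, Real.exp_pos (-(c/2) * T)]
  -- exponential decay implies convergence
  have hdecay : ∀ t, 0 ≤ t → w t ≤ w 0 * Real.exp (-(c/2) * t) := fun t ht =>
    hGron t ht (fun s hs => htrap s hs.1) t ⟨ht, le_refl t⟩
  rw [tendsto_iff_norm_sub_tendsto_zero]
  have hb : ∀ t, 0 ≤ t → ‖x t - X‖ ≤ Mx * (w 0 * Real.exp (-(c/2) * t)) := by
    intro t ht
    have hexp2 := Real.exp_pos (-(c/2) * t)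
    have hw00 := hwnn 0
    refine (pi_norm_le_iff_of_nonneg (by positivity)).2 fun i => ?_
    have h1 := hcompw t i
    have h2 : w t * X i ≤ w t * Mx := mul_le_mul_of_nonneg_left (hMxge i) (hwnn t)
    have h3 : w t * Mx ≤ (w 0 * Real.exp (-(c/2) * t)) * Mx :=
      mul_le_mul_of_nonneg_right (hdecay t ht) hMxpos.le
    have h4 : ‖(x t - X) i‖ = |x t i - X i| := by
      simp [Real.norm_eq_abs]
    rw [h4]
    nlinarith
  refine squeeze_zero' (Filter.Eventually.of_forall fun t => norm_nonneg _)
    ((eventually_ge_atTop 0).mono fun t ht => hb t ht) ?_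
  have h1 : Tendsto (fun t : ℝ => -(c/2) * t) atTop atBot :=
    Tendsto.const_mul_atTop_of_neg (by linarith) tendsto_id
  have h2 : Tendsto (fun t : ℝ => Real.exp (-(c/2) * t)) atTop (𝓝 0) :=
    Real.tendsto_exp_atBot.comp h1
  have h3 : Tendsto (fun t : ℝ => Mx * (w 0 * Real.exp (-(c/2) * t))) atTop
      (𝓝 (Mx * (w 0 * 0))) := (h2.const_mul (w 0)).const_mul Mx
  simpa using h3
end

section
/- Consider the cooperative higher-order Lotka-Volterra system with nonnegative interaction parameters and irreducible A. Any boundary equilibrium of the form (X*_m, 0_{n−m}) with X*_m > 0 and 0 < m < n is unstable: the Jacobian at such a point is block upper triangular with lower-right diagonal block D whose entries D_i = r_i (1 + Σ_{j∈S} a_{ij} x*_j + Σ_{j,k∈S} b_{ijk} x*_j x*_k) are strictly positive (S being the set of surviving species), so the Jacobian has a positive eigenvalue. -/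
/-- any boundary equilibrium of the cooperative higher-order
Lotka-Volterra system (with a nonempty proper set S of surviving species) is
unstable: the diagonal entries of the Jacobian corresponding to extinct species
are strictly positive, and the Jacobian has an eigenvalue with positive real
part. -/
theorem higher_order_LV_cooperative_boundary_equilibrium_unstable
    (n : ℕ) (r : Fin n → ℝ) (a : Fin n → Fin n → ℝ)
    (b : Fin n → Fin n → Fin n → ℝ)
    (hr : ∀ i, 0 < r i)
    (haMetzler : ∀ i j, i ≠ j → 0 ≤ a i j)
    (haIrr : ∀ S : Set (Fin n), S.Nonempty → S ≠ Set.univ →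
      ∃ i ∈ S, ∃ j ∉ S, a i j ≠ 0)
    (hbMetzler : ∀ i j k, (j, k) ≠ (i, i) → 0 ≤ b i j k)
    (S : Finset (Fin n)) (hSne : S.Nonempty) (hSproper : S ≠ Finset.univ)
    (z : Fin n → ℝ)
    (hzpos : ∀ i ∈ S, 0 < z i) (hzzero : ∀ i ∉ S, z i = 0)
    (heq : ∀ i ∈ S,
      1 + (∑ j, a i j * z j) + (∑ j, ∑ k, b i j k * z j * z k) = 0) :
    (∀ i ∉ S,
      LVJacobian r a b z i i =
        r i * (1 + (∑ j, a i j * z j) + (∑ j, ∑ k, b i j k * z j * z k)) ∧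
      0 < LVJacobian r a b z i i) ∧
    ∃ μ ∈ spectrum ℂ ((LVJacobian r a b z).map (Complex.ofReal ·)), 0 < μ.re := by
  -- Auxiliary facts
  have hdiag : ∀ i ∉ S, LVJacobian r a b z i i =
      r i * (1 + (∑ j, a i j * z j) + (∑ j, ∑ k, b i j k * z j * z k)) := by
    intro i hi
    simp [LVJacobian, hzzero i hi]
  have hrow : ∀ i ∉ S, ∀ j, j ≠ i → LVJacobian r a b z i j = 0 := by
    intro i hi j hj
    simp [LVJacobian, hzzero i hi, (Ne.symm hj : ¬ i = j)]
  have hpos : ∀ i ∉ S,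
      0 < r i * (1 + (∑ j, a i j * z j) + (∑ j, ∑ k, b i j k * z j * z k)) := by
    intro i hi
    have hz : ∀ j, 0 ≤ z j := by
      intro j
      by_cases hjS : j ∈ S
      · exact (hzpos j hjS).le
      · exact (hzzero j hjS).ge
    have h1 : 0 ≤ ∑ j, a i j * z j := by
      apply Finset.sum_nonneg
      intro j _
      by_cases hjS : j ∈ S
      · have hij : i ≠ j := fun h => hi (h ▸ hjS)
        exact mul_nonneg (haMetzler i j hij) (hz j)
      · simp [hzzero j hjS]
    have h2 : 0 ≤ ∑ j, ∑ k, b i j k * z j * z k := by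
      apply Finset.sum_nonneg
      intro j _
      apply Finset.sum_nonneg
      intro k _
      by_cases hjS : j ∈ S
      · have hji : j ≠ i := fun h => hi (h ▸ hjS)
        have : (j, k) ≠ (i, i) := by
          simp only [Ne, Prod.mk.injEq, not_and]
          intro h; exact absurd h hji
        exact mul_nonneg (mul_nonneg (hbMetzler i j k this) (hz j)) (hz k)
      · simp [hzzero j hjS]
    have : (0:ℝ) < 1 + (∑ j, a i j * z j) + (∑ j, ∑ k, b i j k * z j * z k) := by
      linarith
    exact mul_pos (hr i) this
  constructor
  · intro i hi
    refine ⟨hdiag i hi, ?_⟩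
    rw [hdiag i hi]
    exact hpos i hi
  · -- pick i ∉ S
    obtain ⟨i, hi⟩ : ∃ i, i ∉ S := by
      by_contra h
      push_neg at h
      exact hSproper (Finset.eq_univ_iff_forall.mpr h)
    set D : ℝ := r i * (1 + (∑ j, a i j * z j) + (∑ j, ∑ k, b i j k * z j * z k))
      with hD
    refine ⟨(D : ℂ), ?_, by simpa using hpos i hi⟩
    rw [spectrum.mem_iff]
    intro hU
    rw [Matrix.isUnit_iff_isUnit_det] at hU
    have hdet : (algebraMap ℂ (Matrix (Fin n) (Fin n) ℂ) (D:ℂ)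
        - (LVJacobian r a b z).map (Complex.ofReal ·)).det = 0 := by
      apply Matrix.det_eq_zero_of_row_eq_zero i
      intro j
      by_cases hji : j = i
      · rw [hji]
        have hmap : ((LVJacobian r a b z).map (Complex.ofReal ·)) i i = (D:ℂ) := by
          rw [Matrix.map_apply, hdiag i hi]
        simp only [Matrix.algebraMap_eq_diagonal, Matrix.sub_apply, Matrix.map_apply,
          Matrix.diagonal_apply_eq]
        rw [hdiag i hi, ← hD, Pi.algebraMap_apply, Algebra.algebraMap_self, RingHom.id_apply,
          sub_self]
      · have : LVJacobian r a b z i j = 0 := hrow i hi j hji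
        simp [Matrix.algebraMap_eq_diagonal, Matrix.sub_apply, Matrix.map_apply,
          this, Matrix.diagonal_apply_ne' _ hji]
    rw [hdet] at hU
    exact hU.ne_zero rfl
end
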